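/- Let H be a real inner product space, Λ : H → H a self-adjoint bounded operator with largest eigenvalue λ = 1/t_g > 0 whose eigenspace is spanned by a unit vector ψ. Suppose c : [t_g, t_g + δ) → H is continuous with c(t_g) = 0, c(t) ≠ 0 for t > t_g, satisfying c(t) = t(Λc(t) − Σ(c(t)) + R(c(t))) where Σ is a continuous quadratic map with (ψ, Σ(ψ)) > 0 and ‖R(c)‖ = o(‖c‖²) as ‖c‖ → 0, and suppose the orthogonal projection P onto ψ^⊥ satisfies ‖Pc(t)‖ ≤ β‖c(t)‖² for small t − t_g. Writing c(t) = α(t)ψ + Pc(t) with α(t) > 0 for t slightly above t_g, then α(t)/(t − t_g) → 1/(t_g² (ψ, Σ(ψ))) as t ↓ t_g; consequently c is right-differentiable at t_g with derivative ψ/(t_g²(ψ,Σ(ψ))). -/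
import Mathlib


open Set Filter
open scoped RealInnerProductSpace

set_option maxHeartbeats 4000000 in
/-- First-order phase transition: the coefficient `α(t) = ⟪ψ, c(t)⟫` of the
solution of the fixed point equation `c = t(Λc − Σ(c) + R(c))` along the top
eigenvector satisfies `α(t)/(t−t_g) → 1/(t_g²(ψ,Σ(ψ)))` as `t ↓ t_g`, and `c`
is right-differentiable at `t_g` with derivative `ψ/(t_g²(ψ,Σ(ψ)))`. -/
theorem stmt9 {H : Type*} [NormedAddCommGroup H] [InnerProductSpace ℝ H]
    (Λ : H →L[ℝ] H) (hsa : ∀ x y : H, ⟪Λ x, y⟫ = ⟪x, Λ y⟫)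
    (tg : ℝ) (htg : 0 < tg) (ψ : H) (hψ : ‖ψ‖ = 1)
    (heig : Λ ψ = (1 / tg) • ψ)
    (heigsp : ∀ x : H, Λ x = (1 / tg) • x → ∃ r : ℝ, x = r • ψ)
    (B : H →L[ℝ] H →L[ℝ] H) (hSigmaPos : 0 < ⟪ψ, B ψ ψ⟫)
    (Rm : H → H)
    (hRm : ∀ δ : ℝ, 0 < δ → ∃ ρ : ℝ, 0 < ρ ∧ ∀ x : H, ‖x‖ ≤ ρ → ‖Rm x‖ ≤ δ * ‖x‖ ^ 2)
    (δ0 : ℝ) (hδ0 : 0 < δ0) (c : ℝ → H)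
    (hc_cont : ContinuousOn c (Ico tg (tg + δ0)))
    (hc0 : c tg = 0)
    (hcne : ∀ t ∈ Ioo tg (tg + δ0), c t ≠ 0)
    (heq : ∀ t ∈ Ico tg (tg + δ0), c t = t • (Λ (c t) - B (c t) (c t) + Rm (c t)))
    (β : ℝ)
    (hP : ∃ δ1 : ℝ, 0 < δ1 ∧ ∀ t ∈ Ico tg (tg + δ1),
      ‖c t - ⟪ψ, c t⟫ • ψ‖ ≤ β * ‖c t‖ ^ 2)
    (hαpos : ∃ δ2 : ℝ, 0 < δ2 ∧ ∀ t ∈ Ioo tg (tg + δ2), 0 < ⟪ψ, c t⟫) :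
    Tendsto (fun t => ⟪ψ, c t⟫ / (t - tg)) (nhdsWithin tg (Ioi tg))
      (nhds (1 / (tg ^ 2 * ⟪ψ, B ψ ψ⟫))) ∧
    HasDerivWithinAt c ((1 / (tg ^ 2 * ⟪ψ, B ψ ψ⟫)) • ψ) (Ici tg) tg := by
  obtain ⟨δ1, hδ1, hPb⟩ := hP
  obtain ⟨δ2, hδ2, hαp⟩ := hαpos
  set l := nhdsWithin tg (Ioi tg) with hl
  set σ := (⟪ψ, B ψ ψ⟫ : ℝ) with hσdef
  set α : ℝ → ℝ := fun t => ⟪ψ, c t⟫ with hαdef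
  set w : ℝ → H := fun t => c t - α t • ψ with hwdef
  set b : ℝ := max β 0 with hbdef
  have hb0 : (0:ℝ) ≤ b := le_max_right _ _
  have htg' : tg ≠ 0 := ne_of_gt htg
  have hσpos : 0 < σ := hSigmaPos
  have hcw : ∀ t, c t = α t • ψ + w t := by
    intro t; rw [hwdef]; module
  -- events of being in small Ioo intervals
  have hIoo : ∀ δ : ℝ, 0 < δ → ∀ᶠ t in l, t ∈ Ioo tg (tg + δ) := by
    intro δ hδ
    filter_upwards [Ioo_mem_nhdsGT_of_mem (⟨le_refl tg, by linarith⟩ : tg ∈ Ico tg (tg + δ))]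
      with t ht using ht
  -- c tends to 0 along l
  have hc0' : Tendsto c l (nhds 0) := by
    have h1 : ContinuousWithinAt c (Ico tg (tg + δ0)) tg :=
      hc_cont tg ⟨le_refl _, by linarith⟩
    have h2 : nhdsWithin tg (Ioo tg (tg + δ0)) ≤ nhdsWithin tg (Ico tg (tg + δ0)) :=
      nhdsWithin_mono _ Ioo_subset_Ico_self
    rw [nhdsWithin_Ioo_eq_nhdsGT (by linarith : tg < tg + δ0)] at h2
    have := h1.tendsto.mono_left h2
    rwa [hc0] at this
  have hcn : Tendsto (fun t => ‖c t‖) l (nhds 0) := by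
    simpa using hc0'.norm
  have hsmall : ∀ r : ℝ, 0 < r → ∀ᶠ t in l, ‖c t‖ ≤ r := by
    intro r hr
    filter_upwards [hcn.eventually (eventually_le_nhds hr)] with t ht using ht
  -- α tends to 0
  have hα0 : Tendsto α l (nhds 0) := by
    have : Tendsto (fun t => (⟪ψ, c t⟫ : ℝ)) l (nhds ⟪ψ, (0:H)⟫) :=
      (Tendsto.inner tendsto_const_nhds hc0')
    simpa using this
  -- basic eventual facts
  have hev : ∀ᶠ t in l, t ∈ Ioo tg (tg + δ0) ∧ 0 < α t ∧ ‖w t‖ ≤ b * ‖c t‖ ^ 2 := by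
    filter_upwards [hIoo δ0 hδ0, hIoo δ1 hδ1, hIoo δ2 hδ2] with t h0 h1 h2
    refine ⟨h0, hαp t h2, ?_⟩
    have := hPb t ⟨le_of_lt h1.1, h1.2⟩
    have hble : β * ‖c t‖ ^ 2 ≤ b * ‖c t‖ ^ 2 := by
      have : β ≤ b := le_max_left _ _
      nlinarith [sq_nonneg (‖c t‖)]
    exact le_trans this hble
  have hαle : ∀ t, α t ≤ ‖c t‖ := by
    intro t
    have := abs_real_inner_le_norm ψ (c t)
    rw [hψ] at this
    calc α t ≤ |⟪ψ, c t⟫| := le_abs_self _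
    _ ≤ 1 * ‖c t‖ := this
    _ = ‖c t‖ := one_mul _
  -- eventual comparability ‖c‖ ≤ 2α
  have h2α : ∀ᶠ t in l, ‖c t‖ ≤ 2 * α t := by
    filter_upwards [hev, hsmall (1 / (2 * (b + 1))) (by positivity)] with t ⟨_, hαt, hwt⟩ hs
    have hbn : b * ‖c t‖ ≤ 1 / 2 := by
      have h1 : b * ‖c t‖ ≤ b * (1 / (2 * (b + 1))) :=
        mul_le_mul_of_nonneg_left hs hb0
      have h2 : b * (1 / (2 * (b + 1))) ≤ 1 / 2 := by
        rw [mul_one_div, div_le_div_iff₀ (by positivity) (by norm_num)]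
        nlinarith
      linarith
    have hcle : ‖c t‖ ≤ α t + ‖w t‖ := by
      calc ‖c t‖ = ‖α t • ψ + w t‖ := by rw [← hcw]
      _ ≤ ‖α t • ψ‖ + ‖w t‖ := norm_add_le _ _
      _ = α t + ‖w t‖ := by
          rw [norm_smul, hψ, mul_one, Real.norm_eq_abs, abs_of_pos hαt]
    nlinarith [norm_nonneg (c t)]
  -- key algebraic identity from the fixed point equation
  have hkey : ∀ t ∈ Ico tg (tg + δ0),
      α t * (t - tg) = tg * t * (⟪ψ, B (c t) (c t)⟫ - ⟪ψ, Rm (c t)⟫) := by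
    intro t ht
    have hΛ : (⟪ψ, Λ (c t)⟫ : ℝ) = (1 / tg) * α t := by
      rw [← hsa, heig, real_inner_smul_left]
    have h1 : α t = t * ((1 / tg) * α t - ⟪ψ, B (c t) (c t)⟫ + ⟪ψ, Rm (c t)⟫) := by
      calc α t = ⟪ψ, c t⟫ := rfl
      _ = ⟪ψ, t • (Λ (c t) - B (c t) (c t) + Rm (c t))⟫ := by rw [← heq t ht]
      _ = t * (⟪ψ, Λ (c t)⟫ - ⟪ψ, B (c t) (c t)⟫ + ⟪ψ, Rm (c t)⟫) := by
          rw [real_inner_smul_right, inner_add_right, inner_sub_right]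
      _ = _ := by rw [hΛ]
    field_simp at h1
    nlinarith [h1]
  -- the normalized "error" function tends to σ
  set E : ℝ → ℝ := fun t => ⟪ψ, B (c t) (c t)⟫ - ⟪ψ, Rm (c t)⟫ with hEdef
  have herr : Tendsto (fun t => E t / (α t) ^ 2) l (nhds σ) := by
    rw [Metric.tendsto_nhds]
    intro ε hε
    set K := 4 * (2 * b + b ^ 2) * ‖B‖ with hKdef
    have hK0 : 0 ≤ K := by positivity
    obtain ⟨ρ, hρ, hRb⟩ := hRm (ε / 8) (by linarith)
    have hr : (0:ℝ) < min ρ (min 1 (ε / (2 * (K + 1)))) := by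
      have : (0:ℝ) < ε / (2 * (K + 1)) := by positivity
      simp [hρ, this]
    filter_upwards [hev, h2α, hsmall _ hr] with t ⟨hI, hαt, hwt⟩ h2 hs
    have hn1 : ‖c t‖ ≤ ρ := le_trans hs (min_le_left _ _)
    have hn2 : ‖c t‖ ≤ 1 := le_trans hs (le_trans (min_le_right _ _) (min_le_left _ _))
    have hn3 : ‖c t‖ ≤ ε / (2 * (K + 1)) :=
      le_trans hs (le_trans (min_le_right _ _) (min_le_right _ _))
    have hn0 : 0 ≤ ‖c t‖ := norm_nonneg _
    have ha2 : α t ≤ ‖c t‖ := hαle t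
    -- decomposition of B c c
    have hBdec : B (c t) (c t) - ((α t) ^ 2) • B ψ ψ
        = α t • (B ψ (w t)) + α t • (B (w t) ψ) + B (w t) (w t) := by
      rw [hcw t]
      simp only [map_add, map_smul, ContinuousLinearMap.add_apply,
        ContinuousLinearMap.smul_apply, map_add, map_smul]
      module
    have hBnorm : ‖B (c t) (c t) - ((α t) ^ 2) • B ψ ψ‖
        ≤ ‖B‖ * (2 * α t * ‖w t‖ + ‖w t‖ ^ 2) := by
      rw [hBdec]
      have e1 : ‖α t • (B ψ (w t))‖ ≤ α t * (‖B‖ * ‖w t‖) := by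
        rw [norm_smul, Real.norm_eq_abs, abs_of_pos hαt]
        have := B.le_opNorm₂ ψ (w t)
        rw [hψ] at this
        nlinarith [le_of_lt hαt, norm_nonneg (w t)]
      have e2 : ‖α t • (B (w t) ψ)‖ ≤ α t * (‖B‖ * ‖w t‖) := by
        rw [norm_smul, Real.norm_eq_abs, abs_of_pos hαt]
        have := B.le_opNorm₂ (w t) ψ
        rw [hψ] at this
        nlinarith [le_of_lt hαt]
      have e3 : ‖B (w t) (w t)‖ ≤ ‖B‖ * ‖w t‖ ^ 2 := by
        have := B.le_opNorm₂ (w t) (w t)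
        nlinarith
      calc ‖α t • (B ψ (w t)) + α t • (B (w t) ψ) + B (w t) (w t)‖
          ≤ ‖α t • (B ψ (w t)) + α t • (B (w t) ψ)‖ + ‖B (w t) (w t)‖ := norm_add_le _ _
      _ ≤ (‖α t • (B ψ (w t))‖ + ‖α t • (B (w t) ψ)‖) + ‖B (w t) (w t)‖ := by
          gcongr; exact norm_add_le _ _
      _ ≤ (α t * (‖B‖ * ‖w t‖) + α t * (‖B‖ * ‖w t‖)) + ‖B‖ * ‖w t‖ ^ 2 := by
          gcongr
      _ = ‖B‖ * (2 * α t * ‖w t‖ + ‖w t‖ ^ 2) := by ring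
    have hE1 : |⟪ψ, B (c t) (c t)⟫ - (α t) ^ 2 * σ|
        ≤ ‖B‖ * (2 * α t * ‖w t‖ + ‖w t‖ ^ 2) := by
      have : (⟪ψ, B (c t) (c t)⟫ : ℝ) - (α t) ^ 2 * σ
          = ⟪ψ, B (c t) (c t) - ((α t) ^ 2) • B ψ ψ⟫ := by
        rw [inner_sub_right, real_inner_smul_right, hσdef]
      rw [this]
      have h := abs_real_inner_le_norm ψ (B (c t) (c t) - ((α t) ^ 2) • B ψ ψ)
      rw [hψ, one_mul] at h
      exact le_trans h hBnorm
    have hE2 : |(⟪ψ, Rm (c t)⟫ : ℝ)| ≤ (ε / 8) * ‖c t‖ ^ 2 := by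
      have h := abs_real_inner_le_norm ψ (Rm (c t))
      rw [hψ, one_mul] at h
      exact le_trans h (hRb _ hn1)
    have hEbd : |E t - (α t) ^ 2 * σ|
        ≤ ‖B‖ * (2 * α t * ‖w t‖ + ‖w t‖ ^ 2) + (ε / 8) * ‖c t‖ ^ 2 := by
      rw [hEdef]
      have : (⟪ψ, B (c t) (c t)⟫ - ⟪ψ, Rm (c t)⟫ : ℝ) - (α t) ^ 2 * σ
          = (⟪ψ, B (c t) (c t)⟫ - (α t) ^ 2 * σ) - ⟪ψ, Rm (c t)⟫ := by ring
      rw [this]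
      exact le_trans (abs_sub (_ : ℝ) _) (by exact add_le_add hE1 hE2)
    -- bound in terms of n then a
    have hw2 : ‖w t‖ ≤ b * ‖c t‖ ^ 2 := hwt
    have hw0 : 0 ≤ ‖w t‖ := norm_nonneg _
    have hB0 : (0:ℝ) ≤ ‖B‖ := B.opNorm_nonneg
    have hEbd2 : |E t - (α t) ^ 2 * σ| ≤ (α t) ^ 2 * (K * ‖c t‖ + ε / 2) := by
      have h1 : 2 * α t * ‖w t‖ ≤ 2 * b * ‖c t‖ ^ 3 := by
        have := mul_le_mul ha2 hw2 (norm_nonneg _) hn0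
        nlinarith [this]
      have h2 : ‖w t‖ ^ 2 ≤ b ^ 2 * ‖c t‖ ^ 3 := by
        have h4 : ‖w t‖ ^ 2 ≤ (b * ‖c t‖ ^ 2) ^ 2 := by
          have := mul_self_le_mul_self hw0 hw2
          nlinarith [this]
        have h5 : ‖c t‖ ^ 4 ≤ ‖c t‖ ^ 3 := by
          nlinarith [pow_nonneg hn0 3]
        nlinarith [sq_nonneg b]
      have hstep : ‖B‖ * (2 * α t * ‖w t‖ + ‖w t‖ ^ 2) + (ε / 8) * ‖c t‖ ^ 2
          ≤ ‖c t‖ ^ 2 * ((2 * b + b ^ 2) * ‖B‖ * ‖c t‖ + ε / 8) := by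
        have h6 : ‖B‖ * (2 * α t * ‖w t‖ + ‖w t‖ ^ 2)
            ≤ ‖B‖ * ((2 * b + b ^ 2) * ‖c t‖ ^ 3) := by
          have := mul_le_mul_of_nonneg_left (add_le_add h1 h2) hB0
          nlinarith [this]
        nlinarith [h6]
      have hn4a : ‖c t‖ ^ 2 ≤ 4 * (α t) ^ 2 := by nlinarith
      have hpos : 0 ≤ (2 * b + b ^ 2) * ‖B‖ * ‖c t‖ + ε / 8 := by positivity
      calc |E t - (α t) ^ 2 * σ|
          ≤ ‖c t‖ ^ 2 * ((2 * b + b ^ 2) * ‖B‖ * ‖c t‖ + ε / 8) := le_trans hEbd hstep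
      _ ≤ (4 * (α t) ^ 2) * ((2 * b + b ^ 2) * ‖B‖ * ‖c t‖ + ε / 8) :=
          mul_le_mul_of_nonneg_right hn4a hpos
      _ = (α t) ^ 2 * (K * ‖c t‖ + ε / 2) := by rw [hKdef]; ring
    have ha0 : (0:ℝ) < (α t) ^ 2 := by positivity
    rw [Real.dist_eq]
    have hdiv : |E t / (α t) ^ 2 - σ| ≤ K * ‖c t‖ + ε / 2 := by
      have : E t / (α t) ^ 2 - σ = (E t - (α t) ^ 2 * σ) / (α t) ^ 2 := by
        field_simp
      rw [this, abs_div, abs_of_pos ha0, div_le_iff₀ ha0,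
        mul_comm (K * ‖c t‖ + ε / 2)]
      exact hEbd2
    have hfin : K * ‖c t‖ + ε / 2 < ε := by
      have : K * ‖c t‖ ≤ K * (ε / (2 * (K + 1))) := mul_le_mul_of_nonneg_left hn3 hK0
      have h2 : K * (ε / (2 * (K + 1))) < ε / 2 := by
        rw [← mul_div_assoc, div_lt_div_iff₀ (by positivity) (by norm_num)]
        nlinarith
      linarith
    exact lt_of_le_of_lt hdiv hfin
  -- the limit L and auxiliary convergence
  have hprod : Tendsto (fun t => tg * t * (E t / (α t) ^ 2)) l (nhds (tg * tg * σ)) := by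
    have hid : Tendsto (fun t : ℝ => t) l (nhds tg) :=
      tendsto_id.mono_right nhdsWithin_le_nhds
    exact (tendsto_const_nhds.mul hid).mul herr
  have hne : tg * tg * σ ≠ 0 := by positivity
  have hinv : Tendsto (fun t => (tg * t * (E t / (α t) ^ 2))⁻¹) l
      (nhds ((tg * tg * σ)⁻¹)) := hprod.inv₀ hne
  -- eventual equality with α t / (t - tg)
  have heq2 : ∀ᶠ t in l, α t / (t - tg) = (tg * t * (E t / (α t) ^ 2))⁻¹ := by
    have hσhalf : ∀ᶠ t in l, σ / 2 < E t / (α t) ^ 2 :=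
      herr.eventually (eventually_gt_nhds (by linarith))
    filter_upwards [hev, hσhalf] with t ⟨hI, hαt, _⟩ hE
    have ht0 : 0 < t := lt_trans htg hI.1
    have htm : 0 < t - tg := by linarith [hI.1]
    have haz : α t ≠ 0 := ne_of_gt hαt
    have hEval : E t = (E t / (α t) ^ 2) * (α t) ^ 2 := by
      field_simp
    have hkid : α t * (t - tg) = tg * t * E t := hkey t ⟨le_of_lt hI.1, hI.2⟩
    rw [hEval] at hkid
    have hEe : 0 < E t / (α t) ^ 2 := lt_trans (by linarith) hE
    have hG : 0 < tg * t * (E t / (α t) ^ 2) := by positivity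
    have h3 : t - tg = (tg * t * (E t / (α t) ^ 2)) * α t := by
      have h4 : α t * (t - tg) = α t * ((tg * t * (E t / (α t) ^ 2)) * α t) := by
        rw [hkid]; ring
      exact mul_left_cancel₀ haz h4
    rw [h3, mul_comm, div_mul_cancel_left₀ haz]
  -- part 1 limit
  have hmain : Tendsto (fun t => α t / (t - tg)) l (nhds ((tg * tg * σ)⁻¹)) :=
    Tendsto.congr' (heq2.mono fun t ht => ht.symm) hinv
  have hL : (tg * tg * σ)⁻¹ = 1 / (tg ^ 2 * σ) := by rw [one_div, pow_two]
  have hpart1 : Tendsto (fun t => α t / (t - tg)) l (nhds (1 / (tg ^ 2 * σ))) := by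
    rw [← hL]; exact hmain
  constructor
  · exact hpart1
  · rw [hasDerivWithinAt_iff_tendsto_slope, Ici_sdiff_left]
    have hslopeq : ∀ᶠ t in l, slope c tg t = (α t / (t - tg)) • ψ + (t - tg)⁻¹ • w t := by
      filter_upwards [hIoo δ0 hδ0] with t ht
      rw [slope_def_module, hc0, sub_zero, hcw t, smul_add, smul_smul, div_eq_inv_mul]
    have hwlim : Tendsto (fun t => (t - tg)⁻¹ • w t) l (nhds 0) := by
      apply squeeze_zero_norm'
        (a := fun t => (4 * b * α t) * (α t / (t - tg)))
      · filter_upwards [hev, h2α] with t ⟨hI, hαt, hwt⟩ h2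
        have htm : 0 < t - tg := by linarith [hI.1]
        have hinv0 : 0 ≤ (t - tg)⁻¹ := le_of_lt (inv_pos.mpr htm)
        have hwb : ‖w t‖ ≤ 4 * b * (α t) ^ 2 := by
          refine le_trans hwt ?_
          nlinarith [mul_self_le_mul_self (norm_nonneg (c t)) h2, hb0,
            sq_nonneg (α t)]
        rw [norm_smul, Real.norm_eq_abs, abs_of_pos (inv_pos.mpr htm)]
        calc (t - tg)⁻¹ * ‖w t‖ ≤ (t - tg)⁻¹ * (4 * b * (α t) ^ 2) := by gcongr
        _ = (4 * b * α t) * (α t / (t - tg)) := by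
            rw [div_eq_inv_mul]; ring
      · have : Tendsto (fun t => (4 * b * α t) * (α t / (t - tg))) l
            (nhds ((4 * b * 0) * (1 / (tg ^ 2 * σ)))) :=
          (tendsto_const_nhds.mul hα0).mul hpart1
        simpa using this
    have hsum : Tendsto (fun t => (α t / (t - tg)) • ψ + (t - tg)⁻¹ • w t) l
        (nhds ((1 / (tg ^ 2 * σ)) • ψ)) := by
      have := (hpart1.smul_const ψ).add hwlim
      rwa [add_zero] at this
    exact Tendsto.congr' (hslopeq.mono fun t ht => ht.symm) hsum
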